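/- Let Ĉ : H_ℓ → H_k be a finite-rank operator, ε > 0, samples ỹ_1,…,ỹ_M ∈ 𝒴, and Q̂ := [⟨Ĉℓ_{ỹ_i}, Ĉℓ_{ỹ_j}⟩_k]_{i,j} ∈ ℝ^{M×M}. The unique minimizer over Hilbert–Schmidt operators D : H_k → H_ℓ of (1/M) Σ_{j=1}^M ‖ℓ_{ỹ_j} − D Ĉ ℓ_{ỹ_j}‖_ℓ² + ε‖D‖_{HS}² is D̂ = Ψ_ỹ (Q̂ + Mε I_M)^{-1} (Ĉ Ψ_ỹ)^⊤, i.e. D̂ = Σ_{i,j} [(Q̂ + Mε I)^{-1}]_{ij} ℓ_{ỹ_i} ⊗ Ĉℓ_{ỹ_j}. -/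

import Mathlib

open scoped RealInnerProductSpace

/-- An abstract presentation of the Hilbert space `HS(K, H)` of Hilbert–Schmidt operators
from `K` to `H`: a Hilbert space `G` generated by rank-one tensors `t a b = a ⊗ b`
(the operator `g ↦ ⟪b, g⟫ a`), with the Hilbert–Schmidt inner product on rank-one
operators, a dense span, and the action `ap` of elements of `G` as operators `K → H`. -/
structure HSOps (H K G : Type*)
    [NormedAddCommGroup H] [InnerProductSpace ℝ H]
    [NormedAddCommGroup K] [InnerProductSpace ℝ K]
    [NormedAddCommGroup G] [InnerProductSpace ℝ G] where
  t : H → K → G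
  inner_t : ∀ a b a' b', ⟪t a b, t a' b'⟫ = ⟪a, a'⟫ * ⟪b, b'⟫
  dense_span :
    (Submodule.span ℝ (Set.range fun p : H × K => t p.1 p.2)).topologicalClosure = ⊤
  ap : G →L[ℝ] K →L[ℝ] H
  ap_t : ∀ a b g, ap (t a b) g = ⟪b, g⟫ • a

/-- Given a finite-rank operator `Ĉ : H_ℓ → H_k`, `ε > 0`, points
`ỹ₁,…,ỹ_M` with features `ψ̃ⱼ = ℓ_{ỹⱼ}`, and `Q̂ = [⟪Ĉψ̃ᵢ, Ĉψ̃ⱼ⟫]`, the unique minimizer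
over Hilbert–Schmidt operators `D : H_k → H_ℓ` of
`(1/M) ∑ⱼ ‖ψ̃ⱼ − D Ĉ ψ̃ⱼ‖² + ε‖D‖²_HS` is
`D̂ = Ψ_ỹ (Q̂ + MεI)⁻¹ (ĈΨ_ỹ)ᵀ = ∑_{i,j} [(Q̂ + MεI)⁻¹]_{ij} ψ̃ᵢ ⊗ Ĉψ̃ⱼ`. -/
theorem stmt8 {Hk Hl G : Type*}
    [NormedAddCommGroup Hk] [InnerProductSpace ℝ Hk] [CompleteSpace Hk]
    [NormedAddCommGroup Hl] [InnerProductSpace ℝ Hl] [CompleteSpace Hl]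
    [NormedAddCommGroup G] [InnerProductSpace ℝ G] [CompleteSpace G]
    (T : HSOps Hl Hk G)
    (Chat : Hl →L[ℝ] Hk) (hfinrank : FiniteDimensional ℝ (LinearMap.range Chat.toLinearMap))
    (M : ℕ) (hM : 0 < M) (ε : ℝ) (hε : 0 < ε)
    (ψ : Fin M → Hl)
    (Q : Matrix (Fin M) (Fin M) ℝ) (hQ : ∀ i j, Q i j = ⟪Chat (ψ i), Chat (ψ j)⟫)
    (W : Matrix (Fin M) (Fin M) ℝ)
    (hW : W = (Q + ((M : ℝ) * ε) • (1 : Matrix (Fin M) (Fin M) ℝ))⁻¹)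
    (risk : G → ℝ)
    (hrisk : ∀ D, risk D = (M : ℝ)⁻¹ * ∑ j, ‖ψ j - T.ap D (Chat (ψ j))‖ ^ 2 + ε * ‖D‖ ^ 2)
    (Dhat : G) (hDhat : Dhat = ∑ i, ∑ j, W i j • T.t (ψ i) (Chat (ψ j))) :
    ∀ D : G, risk Dhat ≤ risk D ∧ (risk D = risk Dhat → D = Dhat) := by
  set u : Fin M → Hk := fun j => Chat (ψ j) with hu
  set A : Matrix (Fin M) (Fin M) ℝ :=
    Q + ((M : ℝ) * ε) • (1 : Matrix (Fin M) (Fin M) ℝ) with hA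
  -- A is positive definite
  have hApos : A.PosDef := by
    rw [Matrix.posDef_iff_dotProduct_mulVec]
    constructor
    · ext i j
      simp [hA, Matrix.conjTranspose_apply, Matrix.one_apply, hQ, real_inner_comm,
        Matrix.add_apply, Matrix.smul_apply, eq_comm (a := i)]
    · intro x hx
      have h1 : dotProduct (star x) (Q.mulVec x) = ‖∑ i, x i • u i‖ ^ 2 := by
        rw [← real_inner_self_eq_norm_sq, sum_inner]
        simp only [dotProduct, Matrix.mulVec, hQ, star_trivial]
        refine Finset.sum_congr rfl fun i _ => ?_
        rw [real_inner_smul_left, inner_sum]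
        simp [real_inner_smul_right, Finset.mul_sum, mul_comm, mul_left_comm, mul_assoc]
        rfl
      have h2 : dotProduct (star x) ((((M : ℝ) * ε) • (1 : Matrix (Fin M) (Fin M) ℝ)).mulVec x)
          = ((M : ℝ) * ε) * ∑ i, x i ^ 2 := by
        simp [dotProduct, Matrix.mulVec, Matrix.one_apply, Finset.mul_sum, sq,
          mul_comm, mul_left_comm, mul_assoc]
      have hxpos : 0 < ∑ i, x i ^ 2 := by
        rcases Function.ne_iff.mp hx with ⟨i, hi⟩
        exact Finset.sum_pos' (fun j _ => sq_nonneg _) ⟨i, Finset.mem_univ i, pow_two_pos_of_ne_zero (by simpa using hi)⟩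
      have hMε : 0 < (M : ℝ) * ε := by positivity
      have key : dotProduct (star x) (A.mulVec x)
          = ‖∑ i, x i • u i‖ ^ 2 + ((M : ℝ) * ε) * ∑ i, x i ^ 2 := by
        rw [hA, Matrix.add_mulVec, dotProduct_add, h1, h2]
      rw [key]
      have := mul_pos hMε hxpos
      nlinarith [sq_nonneg ‖∑ i, x i • u i‖]
  have hWA : W * A = 1 := by
    rw [hW]
    exact Matrix.nonsing_inv_mul _ hApos.det_pos.ne'.isUnit
  -- entrywise normal-matrix identity
  have hWA' : ∀ i j, ∑ k, W i k * Q k j = (if i = j then (1:ℝ) else 0) - ((M:ℝ)*ε) * W i j := by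
    intro i j
    have := congrArg (fun B => B i j) hWA
    simp only [Matrix.mul_apply, hA, Matrix.add_apply, Matrix.smul_apply, Matrix.one_apply,
      smul_eq_mul, Matrix.one_apply] at this
    rw [Finset.sum_congr rfl (fun k _ => by split_ifs <;> ring :
      ∀ k ∈ Finset.univ, W i k * (Q k j + (M:ℝ)*ε * (if k = j then (1:ℝ) else 0))
        = W i k * Q k j + ((M:ℝ)*ε) * (if k = j then W i k else 0))] at this
    rw [Finset.sum_add_distrib, ← Finset.mul_sum, Finset.sum_ite_eq' Finset.univ j (W i)] at this
    simp only [Finset.mem_univ, if_true] at this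
    linarith [this]
  -- the gradient functional
  set Φ : G →L[ℝ] ℝ :=
    (M:ℝ)⁻¹ • (∑ j, (innerSL ℝ (T.ap Dhat (u j) - ψ j)).comp (T.ap.flip (u j)))
      + ε • innerSL ℝ Dhat with hΦdef
  have hΦ : ∀ E, Φ E = (M:ℝ)⁻¹ * ∑ j, ⟪T.ap Dhat (u j) - ψ j, T.ap E (u j)⟫
      + ε * ⟪Dhat, E⟫ := by
    intro E
    simp [hΦdef, ContinuousLinearMap.sum_apply, smul_eq_mul, inner_sub_left,
      Finset.sum_sub_distrib]
  -- Dhat applied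
  have hapDhat : ∀ g : Hk, T.ap Dhat g = ∑ i, ∑ k, (W i k * ⟪u k, g⟫) • ψ i := by
    intro g
    rw [hDhat]
    simp only [map_sum, map_smul, ContinuousLinearMap.coe_sum', Finset.sum_apply,
      ContinuousLinearMap.coe_smul', Pi.smul_apply, T.ap_t, smul_smul]
    rfl
  have hinnerDhat : ∀ E, ⟪Dhat, E⟫ = ∑ i, ∑ k, W i k * ⟪T.t (ψ i) (u k), E⟫ := by
    intro E
    rw [hDhat, sum_inner]
    refine Finset.sum_congr rfl fun i _ => ?_
    rw [sum_inner]
    exact Finset.sum_congr rfl fun k _ => real_inner_smul_left _ _ _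
  -- normal equations on generators
  have hM' : (M : ℝ) ≠ 0 := Nat.cast_ne_zero.mpr hM.ne'
  have hgen : ∀ a b, Φ (T.t a b) = 0 := by
    intro a b
    set α : Fin M → ℝ := fun i => ⟪ψ i, a⟫ with hα
    set β : Fin M → ℝ := fun j => ⟪b, u j⟫ with hβ
    have key1 : ∀ j, ⟪T.ap Dhat (u j), a⟫ = ∑ i, (∑ k, W i k * Q k j) * α i := by
      intro j
      rw [hapDhat, sum_inner]
      refine Finset.sum_congr rfl fun i _ => ?_
      rw [sum_inner, Finset.sum_mul]
      refine Finset.sum_congr rfl fun k _ => ?_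
      rw [real_inner_smul_left]
      have : ⟪u k, u j⟫ = Q k j := (hQ k j).symm
      rw [this, hα, mul_assoc]
    have key2 : ∀ j, ∑ i, (∑ k, W i k * Q k j) * α i
        = α j - ((M:ℝ)*ε) * ∑ i, W i j * α i := by
      intro j
      rw [Finset.sum_congr rfl (fun i _ => by rw [hWA' i j])]
      rw [Finset.sum_congr rfl (fun i _ => by split_ifs <;> ring :
        ∀ i ∈ Finset.univ, ((if i = j then (1:ℝ) else 0) - (M:ℝ)*ε * W i j) * α i
          = (if i = j then α i else 0) - ((M:ℝ)*ε) * (W i j * α i))]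
      rw [Finset.sum_sub_distrib, Finset.sum_ite_eq' Finset.univ j α, ← Finset.mul_sum]
      simp
    have key3 : ⟪Dhat, T.t a b⟫ = ∑ i, ∑ k, W i k * (α i * β k) := by
      rw [hinnerDhat]
      refine Finset.sum_congr rfl fun i _ => Finset.sum_congr rfl fun k _ => ?_
      rw [T.inner_t]
      have : ⟪u k, b⟫ = β k := real_inner_comm _ _
      rw [this, hα]
    have hterm : ∀ j, ⟪T.ap Dhat (u j) - ψ j, T.ap (T.t a b) (u j)⟫
        = -(((M:ℝ)*ε) * ∑ i, W i j * (α i * β j)) := by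
      intro j
      rw [T.ap_t, real_inner_smul_right, inner_sub_left, key1 j, key2 j]
      have : ⟪ψ j, a⟫ = α j := rfl
      rw [this]
      have h4 : ∑ i, W i j * (α i * β j) = (∑ i, W i j * α i) * β j := by
        rw [Finset.sum_mul]
        exact Finset.sum_congr rfl fun i _ => by ring
      rw [h4]; ring
    rw [hΦ, key3, Finset.sum_congr rfl fun j _ => hterm j]
    rw [Finset.sum_neg_distrib, ← Finset.mul_sum, show (∑ i, ∑ k, W i k * (α i * β k))
        = ∑ j, ∑ i, W i j * (α i * β j) from Finset.sum_comm]
    field_simp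
    ring
    
  -- Φ vanishes everywhere
  have hΦ0 : ∀ E, Φ E = 0 := by
    have hle : Submodule.span ℝ (Set.range fun p : Hl × Hk => T.t p.1 p.2)
        ≤ LinearMap.ker (Φ : G →ₗ[ℝ] ℝ) := by
      rw [Submodule.span_le]
      rintro _ ⟨⟨a, b⟩, rfl⟩
      exact hgen a b
    have hcl := Submodule.topologicalClosure_minimal
      (s := Submodule.span ℝ (Set.range fun p : Hl × Hk => T.t p.1 p.2)) hle (ContinuousLinearMap.isClosed_ker Φ)
    rw [T.dense_span] at hcl
    intro E
    exact hcl (Submodule.mem_top (x := E))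
  -- decomposition of risk
  have hdiff : ∀ D : G, risk D = risk Dhat
      + ((M:ℝ)⁻¹ * ∑ j, ‖T.ap (D - Dhat) (u j)‖ ^ 2 + ε * ‖D - Dhat‖ ^ 2) := by
    intro D
    have hE := hΦ0 (D - Dhat)
    rw [hΦ] at hE
    have hexp : ∀ j, ‖ψ j - T.ap D (u j)‖ ^ 2
        = ‖ψ j - T.ap Dhat (u j)‖ ^ 2
          + 2 * ⟪T.ap Dhat (u j) - ψ j, T.ap (D - Dhat) (u j)⟫
          + ‖T.ap (D - Dhat) (u j)‖ ^ 2 := by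
      intro j
      have : ψ j - T.ap D (u j) = (ψ j - T.ap Dhat (u j)) - T.ap (D - Dhat) (u j) := by
        simp only [map_sub, ContinuousLinearMap.sub_apply]
        abel
      rw [this, norm_sub_sq_real]
      have : ⟪ψ j - T.ap Dhat (u j), T.ap (D - Dhat) (u j)⟫
          = - ⟪T.ap Dhat (u j) - ψ j, T.ap (D - Dhat) (u j)⟫ := by
        rw [← inner_neg_left]; congr 1; abel
      rw [this]; ring
    have hnormD : ‖D‖ ^ 2 = ‖Dhat‖ ^ 2 + 2 * ⟪Dhat, D - Dhat⟫ + ‖D - Dhat‖ ^ 2 := by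
      have : D = Dhat + (D - Dhat) := by abel
      nth_rewrite 1 [this]
      rw [norm_add_sq_real]
    have hriskD : ∀ D' : G, risk D'
        = (M : ℝ)⁻¹ * ∑ j, ‖ψ j - T.ap D' (u j)‖ ^ 2 + ε * ‖D'‖ ^ 2 := hrisk
    rw [hriskD D, hriskD Dhat]
    rw [Finset.sum_congr rfl (fun j _ => hexp j), Finset.sum_add_distrib,
      Finset.sum_add_distrib, ← Finset.mul_sum, hnormD]
    ring_nf
    ring_nf at hE
    linarith [hE]
  intro D
  have hn1 : 0 ≤ (M:ℝ)⁻¹ * ∑ j, ‖T.ap (D - Dhat) (u j)‖ ^ 2 := by positivity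
  have hn2 : 0 ≤ ε * ‖D - Dhat‖ ^ 2 := mul_nonneg hε.le (sq_nonneg _)
  constructor
  · rw [hdiff D]
    linarith
  · intro heq
    rw [hdiff D] at heq
    have h0 : ε * ‖D - Dhat‖ ^ 2 = 0 := by linarith
    have : ‖D - Dhat‖ = 0 := by
      have := (mul_eq_zero.mp h0).resolve_left hε.ne'
      exact pow_eq_zero_iff (n := 2) (by norm_num) |>.mp this
    exact sub_eq_zero.mp (norm_eq_zero.mp this)
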